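/- In the value substitution calculus, the multiplicative reduction →m and the exponential reduction →e strongly commute: if u ←e t →m s then u ≠ s and there exists r with u →m r and s →e r. -/

import Mathlib

/-- Terms of the value substitution calculus, in de Bruijn notation:
variables, abstractions, applications and explicit substitutions
(`sub t u` is `t[x←u]`, binding de Bruijn index 0 of `t`). -/
inductive VTm : Type
  | var : Nat → VTm
  | lam : VTm → VTm
  | app : VTm → VTm → VTm
  | sub : VTm → VTm → VTm

namespace VTm

/-- Shift (by one) the free de Bruijn indices `≥ k`. -/
def shift (k : Nat) : VTm → VTm
  | var n => if k ≤ n then var (n+1) else var n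
  | lam t => lam (shift (k+1) t)
  | app t u => app (shift k t) (shift k u)
  | sub t u => sub (shift (k+1) t) (shift k u)

/-- Capture-avoiding (meta-level) substitution of `u` for variable `k`. -/
def subst : VTm → Nat → VTm → VTm
  | var n, k, u => if n = k then u else if k < n then var (n-1) else var n
  | lam t, k, u => lam (subst t (k+1) (shift 0 u))
  | app t s, k, u => app (subst t k u) (subst s k u)
  | sub t s, k, u => sub (subst t (k+1) (shift 0 u)) (subst s k u)

/-- vsub-values: variables and abstractions. -/
inductive IsVal : VTm → Prop
  | var : IsVal (var n)
  | lam : IsVal (lam t)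

/-- Multiplicative root rule `L⟨λx.t⟩u ↦m L⟨t[x←u]⟩` (the recursion on the
substitution context `L` performs the de Bruijn shifts corresponding to the
side condition that the variables bound by `L` do not occur free in `u`). -/
inductive RootM : VTm → VTm → Prop
  | beta : RootM (app (lam t) u) (sub t u)
  | under : RootM (app t (shift 0 u)) s → RootM (app (sub t r) u) (sub s r)

/-- Exponential root rule `t[x←L⟨v⟩] ↦e L⟨t{x:=v}⟩` for an abstraction `v`. -/
inductive RootEAbs : VTm → VTm → Prop
  | beta : RootEAbs (sub t (lam u)) (subst t 0 (lam u))
  | under : RootEAbs (sub (shift 1 t) b) s → RootEAbs (sub t (sub b r)) (sub s r)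

/-- Exponential root rule `t[x←L⟨v⟩] ↦e L⟨t{x:=v}⟩` for a variable `v`. -/
inductive RootEVar : VTm → VTm → Prop
  | beta : RootEVar (sub t (var n)) (subst t 0 (var n))
  | under : RootEVar (sub (shift 1 t) b) s → RootEVar (sub t (sub b r)) (sub s r)

/-- Closure of a root rule under the weak evaluation contexts
`E ::= ⟨·⟩ | t E | E t | E[x←u] | t[x←E]`. -/
inductive Clo (R : VTm → VTm → Prop) : VTm → VTm → Prop
  | root : R t u → Clo R t u
  | appL : Clo R t t' → Clo R (app t u) (app t' u)
  | appR : Clo R u u' → Clo R (app t u) (app t u')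
  | subL : Clo R t t' → Clo R (sub t u) (sub t' u)
  | subR : Clo R u u' → Clo R (sub t u) (sub t u')

/-- Multiplicative reduction `→m`. -/
def StepM : VTm → VTm → Prop := Clo RootM
/-- Abstraction-exponential reduction `→eλ`. -/
def StepEAbs : VTm → VTm → Prop := Clo RootEAbs
/-- Variable-exponential reduction `→evar`. -/
def StepEVar : VTm → VTm → Prop := Clo RootEVar
/-- Exponential reduction `→e = →eλ ∪ →evar`. -/
def StepE (t u : VTm) : Prop := StepEAbs t u ∨ StepEVar t u
/-- vsub-reduction `→vsub = →m ∪ →e`. -/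
def StepVsub (t u : VTm) : Prop := StepM t u ∨ StepE t u

/-- Swap the de Bruijn indices `k` and `k+1`. -/
def swap (k : Nat) : VTm → VTm
  | var n => if n = k then var (k+1) else if n = k+1 then var k else var n
  | lam t => lam (swap (k+1) t)
  | app t u => app (swap k t) (swap k u)
  | sub t u => sub (swap (k+1) t) (swap k u)

/-- Structural equivalence `≡`: least equivalence relation closed under
evaluation contexts generated by the four permutation axioms for explicit
substitutions (the de Bruijn shifts/swaps implement the freshness side
conditions). -/
inductive SEq : VTm → VTm → Prop
  | com : SEq (sub (sub t (shift 0 s)) u) (sub (sub (swap 0 t) (shift 0 u)) s)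
  | apR : SEq (app t (sub s u)) (sub (app (shift 0 t) s) u)
  | apL : SEq (app (sub t u) s) (sub (app t (shift 0 s)) u)
  | es  : SEq (sub t (sub u s)) (sub (sub (shift 1 t) u) s)
  | refl : SEq t t
  | symm : SEq t u → SEq u t
  | trans : SEq t u → SEq u s → SEq t s
  | appL : SEq t t' → SEq (app t u) (app t' u)
  | appR : SEq u u' → SEq (app t u) (app t u')
  | subL : SEq t t' → SEq (sub t u) (sub t' u)
  | subR : SEq u u' → SEq (sub t u) (sub t u')

/-- Terms without explicit substitutions. -/
def NoES : VTm → Prop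
  | var _ => True
  | lam t => NoES t
  | app t u => NoES t ∧ NoES u
  | sub _ _ => False

end VTm
open VTm
namespace VTm

theorem shift_shift {i j : Nat} (h : i ≤ j) (t : VTm) :
    shift (j+1) (shift i t) = shift i (shift j t) := by
  induction t generalizing i j with
  | var n =>
    simp only [shift]
    split_ifs <;> simp only [shift] <;> split_ifs <;> first | rfl | omega
  | lam t ih => simp [shift, ih (by omega : i+1 ≤ j+1)]
  | app t u iht ihu => simp [shift, iht h, ihu h]
  | sub t u iht ihu => simp [shift, iht (by omega : i+1 ≤ j+1), ihu h]

theorem subst_shift_cancel (t : VTm) (n : Nat) (v : VTm) :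
    subst (shift n t) n v = t := by
  induction t generalizing n v with
  | var m =>
    simp only [shift]
    split_ifs with h <;> simp only [subst] <;> split_ifs <;> first | rfl | omega
  | lam t ih => simp [shift, subst, ih]
  | app t u iht ihu => simp [shift, subst, iht, ihu]
  | sub t u iht ihu => simp [shift, subst, iht, ihu]

theorem shift_subst_low {j k : Nat} (h : j ≤ k) (t v : VTm) :
    shift j (subst t k v) = subst (shift j t) (k+1) (shift j v) := by
  induction t generalizing j k v with
  | var m =>
    simp only [subst, shift]
    split_ifs <;>
      simp only [subst, shift] <;> split_ifs <;> first | rfl | omega |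
        (congr 1; omega)
  | lam t ih =>
    simp only [subst, shift, lam.injEq]
    rw [ih (by omega : j+1 ≤ k+1), shift_shift (Nat.zero_le j)]
  | app t u iht ihu => simp [subst, shift, iht h, ihu h]
  | sub t u iht ihu =>
    simp only [subst, shift, sub.injEq]
    exact ⟨by rw [iht (by omega : j+1 ≤ k+1), shift_shift (Nat.zero_le j)],
      ihu h v⟩

theorem shift_subst_high {n k : Nat} (h : n ≤ k) (t v : VTm) :
    shift k (subst t n v) = subst (shift (k+1) t) n (shift k v) := by
  induction t generalizing n k v with
  | var m =>
    simp only [subst, shift]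
    split_ifs <;>
      simp only [subst, shift] <;> split_ifs <;> first | rfl | omega |
        (congr 1; omega)
  | lam t ih =>
    simp only [subst, shift, lam.injEq]
    rw [ih (by omega : n+1 ≤ k+1), shift_shift (Nat.zero_le k)]
  | app t u iht ihu => simp [subst, shift, iht h, ihu h]
  | sub t u iht ihu =>
    simp only [subst, shift, sub.injEq]
    exact ⟨by rw [iht (by omega : n+1 ≤ k+1), shift_shift (Nat.zero_le k)],
      ihu h v⟩

end VTm
namespace VTm

/-- The union of the two exponential root rules. -/
def RootE (t u : VTm) : Prop := RootEAbs t u ∨ RootEVar t u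

theorem RootE.under {t b r s : VTm} (h : RootE (sub (shift 1 t) b) s) :
    RootE (sub t (sub b r)) (sub s r) := by
  rcases h with h | h
  · exact Or.inl (RootEAbs.under h)
  · exact Or.inr (RootEVar.under h)

/-- Multiplicative measure: strictly decreased by `→e`, weakly increased by `→m`. -/
def mu : VTm → Nat
  | var _ => 2
  | lam _ => 2
  | app t u => mu t + mu u
  | sub t u => mu t * mu u

theorem mu_pos (t : VTm) : 2 ≤ mu t := by
  induction t with
  | var n => simp [mu]
  | lam t => simp [mu]
  | app t u iht ihu => simp [mu]; omega
  | sub t u iht ihu => simp [mu]; nlinarith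

theorem mu_shift (k : Nat) (t : VTm) : mu (shift k t) = mu t := by
  induction t generalizing k with
  | var n => simp only [shift]; split_ifs <;> rfl
  | lam t ih => simp [shift, mu]
  | app t u iht ihu => simp [shift, mu, iht, ihu]
  | sub t u iht ihu => simp [shift, mu, iht, ihu]

theorem mu_subst_val (t : VTm) (k : Nat) (v : VTm) (hv : mu v = 2) :
    mu (subst t k v) = mu t := by
  induction t generalizing k v with
  | var n => simp only [subst]; split_ifs <;> simp [mu, hv]
  | lam t ih => simp [subst, mu, ih (k+1) (shift 0 v) (by rw [mu_shift]; exact hv)]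
  | app t u iht ihu => simp [subst, mu, iht k v hv, ihu k v hv]
  | sub t u iht ihu =>
    simp [subst, mu, iht (k+1) (shift 0 v) (by rw [mu_shift]; exact hv), ihu k v hv]

theorem mu_rootM {t s : VTm} (h : RootM t s) : mu t ≤ mu s := by
  induction h with
  | @beta t u =>
    have ht := mu_pos t; have hu := mu_pos u
    simp only [mu]; nlinarith
  | @under t u s r h ih =>
    simp only [mu, mu_shift] at ih ⊢
    nlinarith [mu_pos r, mu_pos u]

theorem mu_stepM {t s : VTm} (h : Clo RootM t s) : mu t ≤ mu s := by
  induction h with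
  | root h => exact mu_rootM h
  | appL h ih => simp only [mu]; omega
  | appR h ih => simp only [mu]; omega
  | @subL t t' u h ih => simp only [mu]; exact Nat.mul_le_mul_right _ ih
  | @subR u u' t h ih => simp only [mu]; exact Nat.mul_le_mul_left _ ih

theorem mu_rootEA {t s : VTm} (h : RootEAbs t s) : mu s < mu t := by
  induction h with
  | @beta t u =>
    have h2 : mu (lam u) = 2 := rfl
    rw [mu_subst_val t 0 (lam u) h2]
    simp only [mu]; have := mu_pos t; omega
  | @under t b s r h ih =>
    simp only [mu, mu_shift] at ih ⊢
    nlinarith [mu_pos r]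

theorem mu_rootEV {t s : VTm} (h : RootEVar t s) : mu s < mu t := by
  induction h with
  | @beta t n =>
    have h2 : mu (var n) = 2 := rfl
    rw [mu_subst_val t 0 (var n) h2]
    simp only [mu]; have := mu_pos t; omega
  | @under t b s r h ih =>
    simp only [mu, mu_shift] at ih ⊢
    nlinarith [mu_pos r]

theorem mu_rootE {t s : VTm} (h : RootE t s) : mu s < mu t := by
  rcases h with h | h
  · exact mu_rootEA h
  · exact mu_rootEV h

theorem mu_stepE {t s : VTm} (h : Clo RootE t s) : mu s < mu t := by
  induction h with
  | root h => exact mu_rootE h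
  | appL h ih => simp only [mu]; omega
  | appR h ih => simp only [mu]; omega
  | @subL t t' u h ih =>
    simp only [mu]
    exact Nat.mul_lt_mul_of_lt_of_le ih (le_refl _) (by have := mu_pos u; omega)
  | @subR u u' t h ih =>
    simp only [mu]
    exact Nat.mul_lt_mul_of_le_of_lt (le_refl _) ih (by have := mu_pos t; omega)

end VTm
namespace VTm

theorem shift_rootM {t s : VTm} (h : RootM t s) (k : Nat) :
    RootM (shift k t) (shift k s) := by
  induction h generalizing k with
  | @beta t u => exact RootM.beta
  | @under t u s r h ih =>
    simp only [shift]
    apply RootM.under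
    have := ih (k+1)
    simp only [shift] at this
    rwa [shift_shift (Nat.zero_le k)] at this

theorem subst_rootM {t s : VTm} (h : RootM t s) (k : Nat) (v : VTm) :
    RootM (subst t k v) (subst s k v) := by
  induction h generalizing k v with
  | @beta t u => exact RootM.beta
  | @under t u s r h ih =>
    simp only [subst]
    apply RootM.under
    have := ih (k+1) (shift 0 v)
    simp only [subst] at this
    rwa [← shift_subst_low (Nat.zero_le k)] at this

theorem shift_rootEA {t s : VTm} (h : RootEAbs t s) (k : Nat) :
    RootEAbs (shift k t) (shift k s) := by
  induction h generalizing k with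
  | @beta t u =>
    have := shift_subst_high (Nat.zero_le k) t (lam u)
    simp only [shift] at this ⊢
    rw [this]
    exact RootEAbs.beta
  | @under t b s r h ih =>
    simp only [shift]
    apply RootEAbs.under
    have := ih (k+1)
    simp only [shift] at this
    rwa [shift_shift (by omega : 1 ≤ k+1)] at this

theorem shift_rootEV {t s : VTm} (h : RootEVar t s) (k : Nat) :
    RootEVar (shift k t) (shift k s) := by
  induction h generalizing k with
  | @beta t n =>
    have := shift_subst_high (Nat.zero_le k) t (var n)
    simp only [shift] at this ⊢
    rw [this]
    split_ifs
    · exact RootEVar.beta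
    · exact RootEVar.beta
  | @under t b s r h ih =>
    simp only [shift]
    apply RootEVar.under
    have := ih (k+1)
    simp only [shift] at this
    rwa [shift_shift (by omega : 1 ≤ k+1)] at this

theorem shift_rootE {t s : VTm} (h : RootE t s) (k : Nat) :
    RootE (shift k t) (shift k s) := by
  rcases h with h | h
  · exact Or.inl (shift_rootEA h k)
  · exact Or.inr (shift_rootEV h k)

theorem shift_cloM {t s : VTm} (h : Clo RootM t s) (k : Nat) :
    Clo RootM (shift k t) (shift k s) := by
  induction h generalizing k with
  | root h => exact Clo.root (shift_rootM h k)
  | appL h ih => exact Clo.appL (ih k)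
  | appR h ih => exact Clo.appR (ih k)
  | subL h ih => exact Clo.subL (ih (k+1))
  | subR h ih => exact Clo.subR (ih k)

theorem subst_cloM {t s : VTm} (h : Clo RootM t s) (k : Nat) (v : VTm) :
    Clo RootM (subst t k v) (subst s k v) := by
  induction h generalizing k v with
  | root h => exact Clo.root (subst_rootM h k v)
  | appL h ih => exact Clo.appL (ih k v)
  | appR h ih => exact Clo.appR (ih k v)
  | subL h ih => exact Clo.subL (ih (k+1) (shift 0 v))
  | subR h ih => exact Clo.subR (ih k v)

theorem shift_cloE {t s : VTm} (h : Clo RootE t s) (k : Nat) :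
    Clo RootE (shift k t) (shift k s) := by
  induction h generalizing k with
  | root h => exact Clo.root (shift_rootE h k)
  | appL h ih => exact Clo.appL (ih k)
  | appR h ih => exact Clo.appR (ih k)
  | subL h ih => exact Clo.subL (ih (k+1))
  | subR h ih => exact Clo.subR (ih k)

end VTm
namespace VTm

/-- Critical-pair lemma: m-redex whose substitution context has its first
explicit substitution e-fired. -/
theorem lemC_A {x s1 : VTm} (hE : RootEAbs x s1) :
    ∀ {a b s0 c : VTm}, x = sub (shift 1 a) c → RootM (app a (shift 0 b)) s0 →
    ∃ s1', RootM (app s1 (shift 0 b)) s1' ∧ RootEAbs (sub (shift 1 s0) c) s1' := by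
  induction hE with
  | @beta t w =>
    intro a b s0 c heq hM
    injection heq with h1 h2
    subst h2
    refine ⟨subst (shift 1 s0) 0 (lam w), ?_, RootEAbs.beta⟩
    have := subst_rootM (shift_rootM hM 1) 0 (lam w)
    simp only [shift] at this
    rw [shift_shift (Nat.zero_le 0) b] at this
    simp only [subst] at this
    rw [subst_shift_cancel] at this
    rw [h1]
    exact this
  | @under t b0 s2 r0 hE0 ih =>
    intro a b s0 c heq hM
    injection heq with h1 h2
    subst h2
    have hM' := shift_rootM hM 1
    simp only [shift] at hM'
    rw [shift_shift (Nat.zero_le 0) b] at hM'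
    have heq' : sub (shift 1 t) b0 = sub (shift 1 (shift 1 a)) b0 := by rw [h1]
    obtain ⟨s2', hm2, he2⟩ := ih heq' hM'
    exact ⟨sub s2' r0, RootM.under hm2, RootEAbs.under he2⟩

theorem lemC_V {x s1 : VTm} (hE : RootEVar x s1) :
    ∀ {a b s0 c : VTm}, x = sub (shift 1 a) c → RootM (app a (shift 0 b)) s0 →
    ∃ s1', RootM (app s1 (shift 0 b)) s1' ∧ RootEVar (sub (shift 1 s0) c) s1' := by
  induction hE with
  | @beta t n =>
    intro a b s0 c heq hM
    injection heq with h1 h2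
    subst h2
    refine ⟨subst (shift 1 s0) 0 (var n), ?_, RootEVar.beta⟩
    have := subst_rootM (shift_rootM hM 1) 0 (var n)
    simp only [shift] at this
    rw [shift_shift (Nat.zero_le 0) b] at this
    simp only [subst] at this
    rw [subst_shift_cancel] at this
    rw [h1]
    exact this
  | @under t b0 s2 r0 hE0 ih =>
    intro a b s0 c heq hM
    injection heq with h1 h2
    subst h2
    have hM' := shift_rootM hM 1
    simp only [shift] at hM'
    rw [shift_shift (Nat.zero_le 0) b] at hM'
    have heq' : sub (shift 1 t) b0 = sub (shift 1 (shift 1 a)) b0 := by rw [h1]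
    obtain ⟨s2', hm2, he2⟩ := ih heq' hM'
    exact ⟨sub s2' r0, RootM.under hm2, RootEVar.under he2⟩

/-- Root-m step versus any e-step. -/
theorem lemA {c s : VTm} (hM : RootM c s) :
    ∀ {u : VTm}, Clo RootE c u → ∃ r, RootM u r ∧ Clo RootE s r := by
  induction hM with
  | @beta a b =>
    intro u hE
    cases hE with
    | root h => rcases h with h | h <;> cases h
    | appL h1 =>
      cases h1 with
      | root h => rcases h with h | h <;> cases h
    | appR h1 => exact ⟨sub a _, RootM.beta, Clo.subR h1⟩
  | @under a b s0 r0 hM0 ih =>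
    intro u hE
    cases hE with
    | root h => rcases h with h | h <;> cases h
    | appR h1 =>
      obtain ⟨r0', hm', he'⟩ := ih (Clo.appR (shift_cloE h1 0))
      exact ⟨sub r0' r0, RootM.under hm', Clo.subL he'⟩
    | appL h1 =>
      cases h1 with
      | subL h2 =>
        obtain ⟨r0', hm', he'⟩ := ih (Clo.appL h2)
        exact ⟨sub r0' r0, RootM.under hm', Clo.subL he'⟩
      | subR h2 => exact ⟨sub s0 _, RootM.under hM0, Clo.subR h2⟩
      | root h2 =>
        rcases h2 with h2 | h2
        · cases h2 with
          | @beta _ w =>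
            refine ⟨subst s0 0 (lam w), ?_,
              Clo.root (Or.inl RootEAbs.beta)⟩
            have := subst_rootM hM0 0 (lam w)
            simp only [subst] at this
            rwa [subst_shift_cancel] at this
          | @under _ b1 s2 r1 hE0 =>
            obtain ⟨s1', hm', he'⟩ := lemC_A hE0 rfl hM0
            exact ⟨sub s1' r1, RootM.under hm',
              Clo.root (Or.inl (RootEAbs.under he'))⟩
        · cases h2 with
          | @beta _ n =>
            refine ⟨subst s0 0 (var n), ?_,
              Clo.root (Or.inr RootEVar.beta)⟩
            have := subst_rootM hM0 0 (var n)
            simp only [subst] at this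
            rwa [subst_shift_cancel] at this
          | @under _ b1 s2 r1 hE0 =>
            obtain ⟨s1', hm', he'⟩ := lemC_V hE0 rfl hM0
            exact ⟨sub s1' r1, RootM.under hm',
              Clo.root (Or.inr (RootEVar.under he'))⟩

/-- Root-e step versus any m-step (abstraction case). -/
theorem lemB_A {c u : VTm} (hE : RootEAbs c u) :
    ∀ {s : VTm}, Clo RootM c s → ∃ r, Clo RootM u r ∧ RootEAbs s r := by
  induction hE with
  | @beta a w =>
    intro s hM
    cases hM with
    | root h => cases h
    | subL h1 => exact ⟨subst _ 0 (lam w), subst_cloM h1 0 (lam w), RootEAbs.beta⟩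
    | subR h1 =>
      cases h1 with
      | root h => cases h
  | @under a b0 s0 r0 hE0 ih =>
    intro s hM
    cases hM with
    | root h => cases h
    | subL h1 =>
      obtain ⟨r', hm', he'⟩ := ih (Clo.subL (shift_cloM h1 1))
      exact ⟨sub r' r0, Clo.subL hm', RootEAbs.under he'⟩
    | subR h1 =>
      cases h1 with
      | root h => cases h
      | subL h2 =>
        obtain ⟨r', hm', he'⟩ := ih (Clo.subR h2)
        exact ⟨sub r' r0, Clo.subL hm', RootEAbs.under he'⟩
      | subR h2 => exact ⟨sub s0 _, Clo.subR h2, RootEAbs.under hE0⟩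

theorem lemB_V {c u : VTm} (hE : RootEVar c u) :
    ∀ {s : VTm}, Clo RootM c s → ∃ r, Clo RootM u r ∧ RootEVar s r := by
  induction hE with
  | @beta a n =>
    intro s hM
    cases hM with
    | root h => cases h
    | subL h1 => exact ⟨subst _ 0 (var n), subst_cloM h1 0 (var n), RootEVar.beta⟩
    | subR h1 =>
      cases h1 with
      | root h => cases h
  | @under a b0 s0 r0 hE0 ih =>
    intro s hM
    cases hM with
    | root h => cases h
    | subL h1 =>
      obtain ⟨r', hm', he'⟩ := ih (Clo.subL (shift_cloM h1 1))
      exact ⟨sub r' r0, Clo.subL hm', RootEVar.under he'⟩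
    | subR h1 =>
      cases h1 with
      | root h => cases h
      | subL h2 =>
        obtain ⟨r', hm', he'⟩ := ih (Clo.subR h2)
        exact ⟨sub r' r0, Clo.subL hm', RootEVar.under he'⟩
      | subR h2 => exact ⟨sub s0 _, Clo.subR h2, RootEVar.under hE0⟩

theorem lemB {c u s : VTm} (hE : RootE c u) (hM : Clo RootM c s) :
    ∃ r, Clo RootM u r ∧ RootE s r := by
  rcases hE with hE | hE
  · obtain ⟨r, hm, he⟩ := lemB_A hE hM
    exact ⟨r, hm, Or.inl he⟩
  · obtain ⟨r, hm, he⟩ := lemB_V hE hM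
    exact ⟨r, hm, Or.inr he⟩

/-- The full commutation diagram. -/
theorem lemD {t u : VTm} (hE : Clo RootE t u) :
    ∀ {s : VTm}, Clo RootM t s → ∃ r, Clo RootM u r ∧ Clo RootE s r := by
  induction hE with
  | root h =>
    intro s hM
    obtain ⟨r, hm, he⟩ := lemB h hM
    exact ⟨r, hm, Clo.root he⟩
  | @appL a a1 b h1 ih =>
    intro s hM
    cases hM with
    | root h =>
      obtain ⟨r, hm, he⟩ := lemA h (Clo.appL h1)
      exact ⟨r, Clo.root hm, he⟩
    | appL h2 =>
      obtain ⟨r0, hm, he⟩ := ih h2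
      exact ⟨app r0 b, Clo.appL hm, Clo.appL he⟩
    | appR h2 => exact ⟨app a1 _, Clo.appR h2, Clo.appL h1⟩
  | @appR b b1 a h1 ih =>
    intro s hM
    cases hM with
    | root h =>
      obtain ⟨r, hm, he⟩ := lemA h (Clo.appR h1)
      exact ⟨r, Clo.root hm, he⟩
    | appL h2 => exact ⟨app _ b1, Clo.appL h2, Clo.appR h1⟩
    | appR h2 =>
      obtain ⟨r0, hm, he⟩ := ih h2
      exact ⟨app a r0, Clo.appR hm, Clo.appR he⟩
  | @subL a a1 b h1 ih =>
    intro s hM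
    cases hM with
    | root h => cases h
    | subL h2 =>
      obtain ⟨r0, hm, he⟩ := ih h2
      exact ⟨sub r0 b, Clo.subL hm, Clo.subL he⟩
    | subR h2 => exact ⟨sub a1 _, Clo.subR h2, Clo.subL h1⟩
  | @subR b b1 a h1 ih =>
    intro s hM
    cases hM with
    | root h => cases h
    | subL h2 => exact ⟨sub _ b1, Clo.subL h2, Clo.subR h1⟩
    | subR h2 =>
      obtain ⟨r0, hm, he⟩ := ih h2
      exact ⟨sub a r0, Clo.subR hm, Clo.subR he⟩

theorem clo_mono {R R' : VTm → VTm → Prop} (h : ∀ a b, R a b → R' a b)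
    {t u : VTm} (hc : Clo R t u) : Clo R' t u := by
  induction hc with
  | root hr => exact Clo.root (h _ _ hr)
  | appL _ ih => exact Clo.appL ih
  | appR _ ih => exact Clo.appR ih
  | subL _ ih => exact Clo.subL ih
  | subR _ ih => exact Clo.subR ih

theorem clo_rootE_split {t u : VTm} (h : Clo RootE t u) : StepE t u := by
  induction h with
  | root hr =>
    rcases hr with hr | hr
    · exact Or.inl (Clo.root hr)
    · exact Or.inr (Clo.root hr)
  | appL _ ih => rcases ih with ih | ih
                 · exact Or.inl (Clo.appL ih)
                 · exact Or.inr (Clo.appL ih)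
  | appR _ ih => rcases ih with ih | ih
                 · exact Or.inl (Clo.appR ih)
                 · exact Or.inr (Clo.appR ih)
  | subL _ ih => rcases ih with ih | ih
                 · exact Or.inl (Clo.subL ih)
                 · exact Or.inr (Clo.subL ih)
  | subR _ ih => rcases ih with ih | ih
                 · exact Or.inl (Clo.subR ih)
                 · exact Or.inr (Clo.subR ih)

theorem stepE_cloE {t u : VTm} (h : StepE t u) : Clo RootE t u := by
  rcases h with h | h
  · exact clo_mono (fun a b hr => Or.inl hr) h
  · exact clo_mono (fun a b hr => Or.inr hr) h

end VTm

/-- `→m` and `→e` strongly commute. -/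
theorem m_e_strongly_commute (t u s : VTm)
    (he : StepE t u) (hm : StepM t s) :
    u ≠ s ∧ ∃ r, StepM u r ∧ StepE s r := by
  have he' : Clo RootE t u := stepE_cloE he
  constructor
  · intro heq
    have h1 : mu u < mu t := mu_stepE he'
    have h2 : mu t ≤ mu s := mu_stepM hm
    rw [heq] at h1
    omega
  · obtain ⟨r, hm', he''⟩ := lemD he' hm
    exact ⟨r, hm', clo_rootE_split he''⟩
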